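/- arXiv:1604.00197 — 3 statements merged into one kernel-verified Lean document; each statement's English description precedes it below -/
import Mathlib

section
/- Let K be a symmetric quadratic form on ℝ^{d×𝓡} (K_{jρlσ} = K_{lσjρ}). Then for any [0,N)^d-periodic y : ℤ^d → ℝ^d, Σ_{x∈Q_N} K[D_{𝓡,1}y(x), D_{𝓡,1}y(x)] = N^d Σ_{k∈Q̂_N} ŷ(k)^T H(k) conj(ŷ(k)), where H(k)_{jl} = Σ_{ρ,σ∈𝓡} K_{jρlσ}(cos(ρ·k)−1+i sin(ρ·k))(cos(σ·k)−1−i sin(σ·k)). Moreover H(k) is Hermitian, [0,2π)^d-periodic, and conj(H(k)) = H(−k); if additionally K_{jρlσ} = K_{j(−ρ)l(−σ)}, then H(k) is real symmetric with H(k)_{jl} = Σ_{ρ,σ} K_{jρlσ}[(cos(ρk)−1)(cos(σk)−1)+sin(ρk)sin(σk)]. -/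
open Real

noncomputable section

/-- The inner product `ρ·k` of a lattice vector `ρ ∈ 𝓡` with `k ∈ ℝ^d`. -/
def ipk (d : ℕ) (ρ : Fin d → ℤ) (k : Fin d → ℝ) : ℝ :=
  ∑ i, (ρ i : ℝ) * k i

/-- The dynamical matrix
`H(k)_{jl} = Σ_{ρ,σ} K_{jρlσ} (cos(ρk)−1+i sin(ρk))(cos(σk)−1−i sin(σk))`. -/
def Hmat (d : ℕ) (R : Finset (Fin d → ℤ))
    (K : Fin d → ↥R → Fin d → ↥R → ℝ) (k : Fin d → ℝ) :
    Matrix (Fin d) (Fin d) ℂ :=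
  fun j l => ∑ ρ : ↥R, ∑ σ : ↥R,
    ((K j ρ l σ : ℝ) : ℂ) *
      (((Real.cos (ipk d ρ.1 k) - 1 : ℝ) : ℂ) +
        Complex.I * ((Real.sin (ipk d ρ.1 k) : ℝ) : ℂ)) *
      (((Real.cos (ipk d σ.1 k) - 1 : ℝ) : ℂ) -
        Complex.I * ((Real.sin (ipk d σ.1 k) : ℝ) : ℂ))


lemma orth1 (N : ℕ) (hN : 0 < N) (a b : Fin N) :
    ∑ m : Fin N, Complex.exp (Complex.I * (((a : ℝ) - (b : ℝ)) * (2 * π * (m : ℝ) / N))) =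
      if a = b then (N : ℂ) else 0 := by
  have hNC : (N : ℂ) ≠ 0 := Nat.cast_ne_zero.2 hN.ne'
  set z : ℂ := Complex.I * (((a : ℝ) - (b : ℝ)) * (2 * π / N)) with hz
  have hterm : ∀ m : Fin N,
      Complex.exp (Complex.I * (((a : ℝ) - (b : ℝ)) * (2 * π * (m : ℝ) / N)))
        = Complex.exp z ^ (m : ℕ) := by
    intro m
    rw [← Complex.exp_nat_mul, hz]
    congr 1
    push_cast
    ring
  simp_rw [hterm]
  rw [Fin.sum_univ_eq_sum_range (fun n => Complex.exp z ^ n)]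
  by_cases hab : a = b
  · subst hab
    have : z = 0 := by rw [hz]; push_cast; ring
    simp [this]
  · rw [if_neg hab]
    set n0 : ℤ := (a : ℤ) - (b : ℤ) with hn0
    have hzN : Complex.exp z ^ N = 1 := by
      rw [← Complex.exp_nat_mul]
      have h1 : (N : ℂ) * z = (n0 : ℂ) * (2 * π * Complex.I) := by
        rw [hz, hn0]; push_cast; field_simp
      rw [h1, Complex.exp_int_mul_two_pi_mul_I]
    have hz1 : Complex.exp z ≠ 1 := by
      intro h
      rw [Complex.exp_eq_one_iff] at h
      obtain ⟨n, hn⟩ := h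
      rw [hz] at hn
      have h2 : Complex.I * ((((a : ℝ) - (b : ℝ)) * (2 * π / N) : ℝ) : ℂ)
          = Complex.I * (((n : ℝ) * (2 * π) : ℝ) : ℂ) := by
        push_cast at hn ⊢
        linear_combination hn
      have h3 : ((a : ℝ) - (b : ℝ)) * (2 * π / N) = (n : ℝ) * (2 * π) :=
        Complex.ofReal_inj.1 (mul_left_cancel₀ Complex.I_ne_zero h2)
      have hpi : (0:ℝ) < π := pi_pos
      have hNe : (0:ℝ) < N := by exact_mod_cast hN
      have h4 : ((a : ℝ) - (b : ℝ)) = (n : ℝ) * N := by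
        field_simp at h3
        nlinarith [h3]
      have h5 : (a:ℤ) - (b:ℤ) = n * N := by exact_mod_cast h4
      have hb1 : (a:ℤ) < N := by exact_mod_cast a.2
      have hb2 : (b:ℤ) < N := by exact_mod_cast b.2
      have ha0 : (0:ℤ) ≤ (a:ℤ) := Int.natCast_nonneg _
      have hb0 : (0:ℤ) ≤ (b:ℤ) := Int.natCast_nonneg _
      have hNZ : (0:ℤ) < N := by exact_mod_cast hN
      have hn0' : n = 0 := by
        rcases lt_trichotomy n 0 with h | h | h
        · have := mul_le_mul_of_nonneg_right (show n ≤ -1 by omega) hNZ.le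
          omega
        · exact h
        · have := mul_le_mul_of_nonneg_right (show 1 ≤ n by omega) hNZ.le
          omega
      rw [hn0'] at h5
      simp at h5
      exact hab (Fin.ext (by omega))
    rw [geom_sum_eq hz1, hzN]
    simp

def Fker (d N : ℕ) (x k : Fin d → Fin N) : ℂ :=
  Complex.exp (-(Complex.I * ((∑ i, (x i : ℝ) * (2 * π * (k i : ℝ) / N) : ℝ) : ℂ)))

lemma Fker_orth (d N : ℕ) (hN : 0 < N) (x x' : Fin d → Fin N) :
    ∑ k : Fin d → Fin N, Fker d N x k * (starRingEnd ℂ) (Fker d N x' k) =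
      if x = x' then ((N : ℂ)) ^ d else 0 := by
  have hstep : ∀ k : Fin d → Fin N,
      Fker d N x k * (starRingEnd ℂ) (Fker d N x' k) =
        ∏ i, Complex.exp (Complex.I * (((x' i : ℝ) - (x i : ℝ)) * (2 * π * (k i : ℝ) / N))) := by
    intro k
    rw [Fker, Fker, ← Complex.exp_conj, ← Complex.exp_add, ← Complex.exp_sum]
    congr 1
    simp only [map_neg, map_mul, Complex.conj_I, Complex.conj_ofReal]
    push_cast
    simp only [neg_mul, neg_neg, Finset.mul_sum, Finset.sum_neg_distrib]
    rw [neg_add_eq_sub, ← Finset.sum_sub_distrib]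
    apply Finset.sum_congr rfl
    intro i _
    ring
  simp_rw [hstep]
  have hps := Fintype.prod_sum (ι := Fin d) (κ := fun _ => Fin N)
    (fun i m => Complex.exp (Complex.I * (((x' i : ℝ) - (x i : ℝ)) * (2 * π * (m : ℝ) / N))))
  rw [← hps]
  by_cases hxx : x = x'
  · subst hxx
    rw [if_pos rfl]
    have : ∀ i : Fin d, (∑ m : Fin N,
        Complex.exp (Complex.I * (((x i : ℝ) - (x i : ℝ)) * (2 * π * (m : ℝ) / N)))) = (N : ℂ) := by
      intro i; rw [orth1 N hN]; simp
    rw [Finset.prod_congr rfl (fun i _ => this i)]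
    simp
  · rw [if_neg hxx]
    obtain ⟨i0, hi0⟩ : ∃ i, x' i ≠ x i := by
      by_contra h
      push_neg at h
      exact hxx (funext fun i => (h i).symm)
    apply Finset.prod_eq_zero (Finset.mem_univ i0)
    rw [orth1 N hN, if_neg hi0]

lemma parseval (d N : ℕ) (hN : 0 < N) (u v : (Fin d → Fin N) → ℝ) :
    (∑ x : Fin d → Fin N, ((u x : ℝ) : ℂ) * ((v x : ℝ) : ℂ)) =
      ((N : ℂ)) ^ d * ∑ k : Fin d → Fin N,
        ((((N : ℂ)) ^ d)⁻¹ * ∑ x : Fin d → Fin N, ((u x : ℝ) : ℂ) * Fker d N x k) *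
          (starRingEnd ℂ) ((((N : ℂ)) ^ d)⁻¹ * ∑ x : Fin d → Fin N, ((v x : ℝ) : ℂ) * Fker d N x k) := by
  have hNC : ((N : ℂ)) ^ d ≠ 0 := pow_ne_zero _ (Nat.cast_ne_zero.2 hN.ne')
  have hconj : (starRingEnd ℂ) ((((N : ℂ)) ^ d)⁻¹) = (((N : ℂ)) ^ d)⁻¹ := by
    simp [map_inv₀, map_pow]
  have key : ∀ k : Fin d → Fin N,
      ((((N : ℂ)) ^ d)⁻¹ * ∑ x : Fin d → Fin N, ((u x : ℝ) : ℂ) * Fker d N x k) *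
          (starRingEnd ℂ) ((((N : ℂ)) ^ d)⁻¹ * ∑ x : Fin d → Fin N, ((v x : ℝ) : ℂ) * Fker d N x k)
        = (((N : ℂ)) ^ d)⁻¹ * (((N : ℂ)) ^ d)⁻¹ *
          ∑ x : Fin d → Fin N, ∑ x' : Fin d → Fin N,
            ((u x : ℝ) : ℂ) * ((v x' : ℝ) : ℂ) * (Fker d N x k * (starRingEnd ℂ) (Fker d N x' k)) := by
    intro k
    rw [map_mul, hconj, map_sum, mul_mul_mul_comm, Finset.sum_mul_sum]
    congr 1
    apply Finset.sum_congr rfl; intro x _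
    apply Finset.sum_congr rfl; intro x' _
    simp only [map_mul, Complex.conj_ofReal]
    ring
  simp_rw [key]
  rw [← Finset.mul_sum, Finset.sum_comm (γ := Fin d → Fin N)]
  have swap : ∀ x : Fin d → Fin N,
      (∑ k : Fin d → Fin N, ∑ x' : Fin d → Fin N,
        ((u x : ℝ) : ℂ) * ((v x' : ℝ) : ℂ) * (Fker d N x k * (starRingEnd ℂ) (Fker d N x' k)))
      = ((u x : ℝ) : ℂ) * ((v x : ℝ) : ℂ) * ((N : ℂ)) ^ d := by
    intro x
    rw [Finset.sum_comm]
    have : ∀ x' : Fin d → Fin N,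
        (∑ k : Fin d → Fin N,
          ((u x : ℝ) : ℂ) * ((v x' : ℝ) : ℂ) * (Fker d N x k * (starRingEnd ℂ) (Fker d N x' k)))
        = ((u x : ℝ) : ℂ) * ((v x' : ℝ) : ℂ) * (if x = x' then ((N : ℂ)) ^ d else 0) := by
      intro x'
      rw [← Finset.mul_sum, Fker_orth d N hN]
    simp_rw [this]
    simp [mul_ite]
  simp_rw [swap]
  rw [← Finset.sum_mul, ← mul_assoc]
  field_simp


open Fin.NatCast in
lemma shift_sum (d N : ℕ) (hN : 0 < N) (g : (Fin d → ℤ) → ℂ)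
    (hper : ∀ x z : Fin d → ℤ, g (x + N • z) = g x) (ρ : Fin d → ℤ) :
    ∑ x : Fin d → Fin N, g ((fun i => (x i : ℤ)) + ρ) =
      ∑ x : Fin d → Fin N, g (fun i => (x i : ℤ)) := by
  haveI : NeZero N := ⟨hN.ne'⟩
  have hmod : ∀ a : ℤ, ((N : ℤ)) ∣ a % N - a := by
    intro a
    refine ⟨-(a / N), ?_⟩
    have := Int.emod_add_mul_ediv a N
    linarith
  set c : Fin d → Fin N := fun i => ((ρ i % (N : ℤ)).toNat : Fin N) with hc
  apply Fintype.sum_equiv (Equiv.addRight c)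
    (fun x => g ((fun i => (x i : ℤ)) + ρ)) (fun x => g (fun i => (x i : ℤ)))
  intro x
  have hdvd : ∀ i, ((N : ℤ)) ∣ (((x i + c i : Fin N) : ℤ) - ((x i : ℤ) + ρ i)) := by
    intro i
    have hcv : ((c i : ℕ) : ℤ) = (ρ i % N) % N := by
      rw [hc]
      have : ((((ρ i % (N : ℤ)).toNat : ℕ) : Fin N) : ℕ) = ((ρ i % (N : ℤ)).toNat : ℕ) % N :=
        Fin.val_natCast _ _
      have h3 : (0:ℤ) ≤ ρ i % N := Int.emod_nonneg _ (by exact_mod_cast hN.ne')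
      push_cast [this]
      rw [Int.toNat_of_nonneg h3]
    have hval : (((x i + c i : Fin N) : ℤ)) = (((x i : ℕ) : ℤ) + ((c i : ℕ) : ℤ)) % N := by
      have : ((x i + c i : Fin N) : ℕ) = ((x i : ℕ) + (c i : ℕ)) % N := Fin.val_add _ _
      push_cast [this]
      rfl
    rw [hval, hcv]
    obtain ⟨q1, e1⟩ := hmod (((x i : ℕ) : ℤ) + (ρ i % N) % N)
    obtain ⟨q2, e2⟩ := hmod (ρ i % N)
    obtain ⟨q3, e3⟩ := hmod (ρ i)
    exact ⟨q1 + q2 + q3, by linarith⟩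
  set z : Fin d → ℤ := fun i => (((x i + c i : Fin N) : ℤ) - ((x i : ℤ) + ρ i)) / N with hz
  have hxz : (fun i => (((Equiv.addRight c) x) i : ℤ)) = ((fun i => (x i : ℤ)) + ρ) + N • z := by
    funext i
    show ((x i + c i : Fin N) : ℤ) =
      ((x i : ℤ) + ρ i) + N • ((((x i + c i : Fin N) : ℤ) - ((x i : ℤ) + ρ i)) / N)
    rw [nsmul_eq_mul, Int.mul_ediv_cancel' (hdvd i)]
    ring
  show g ((fun i => (x i : ℤ)) + ρ) = g (fun i => (((Equiv.addRight c) x) i : ℤ))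
  rw [hxz, hper]

lemma hat_shift (d N : ℕ) (hN : 0 < N) (y : (Fin d → ℤ) → (Fin d → ℝ))
    (hper : ∀ x z : Fin d → ℤ, y (x + N • z) = y x) (j : Fin d) (ρ : Fin d → ℤ)
    (k : Fin d → Fin N) :
    ∑ x : Fin d → Fin N, ((y ((fun i => (x i : ℤ)) + ρ) j : ℝ) : ℂ) * Fker d N x k
      = Complex.exp (Complex.I * ((ipk d ρ (fun i => 2 * π * (k i : ℝ) / N) : ℝ) : ℂ)) *
        ∑ x : Fin d → Fin N, ((y (fun i => (x i : ℤ)) j : ℝ) : ℂ) * Fker d N x k := by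
  have hNR : ((N : ℝ)) ≠ 0 := Nat.cast_ne_zero.2 hN.ne'
  set θ : Fin d → ℝ := fun i => 2 * π * (k i : ℝ) / N with hθ
  set g : (Fin d → ℤ) → ℂ := fun w =>
    ((y w j : ℝ) : ℂ) * Complex.exp (-(Complex.I * ((∑ i, ((w i : ℤ) : ℝ) * θ i : ℝ) : ℂ))) with hg
  have hgper : ∀ w z : Fin d → ℤ, g (w + N • z) = g w := by
    intro w z
    rw [hg]
    simp only [hper]
    congr 1
    set n : ℤ := ∑ i, z i * ((k i : ℕ) : ℤ) with hn
    have hsum : (∑ i, (((w + N • z) i : ℤ) : ℝ) * θ i : ℝ)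
        = (∑ i, ((w i : ℤ) : ℝ) * θ i) + (n : ℝ) * (2 * π) := by
      rw [hn]
      simp only [Pi.add_apply, Pi.smul_apply, nsmul_eq_mul, Pi.mul_apply, Pi.natCast_apply]
      push_cast
      rw [Finset.sum_mul, ← Finset.sum_add_distrib]
      apply Finset.sum_congr rfl
      intro i _
      simp only [hθ]
      field_simp
    rw [hsum]
    push_cast
    rw [mul_add, neg_add, Complex.exp_add]
    have h1 : Complex.exp (-(Complex.I * ((n : ℂ) * (2 * (π : ℂ))))) = 1 := by
      have h2 : -(Complex.I * ((n : ℂ) * (2 * (π : ℂ)))) = ((-n : ℤ) : ℂ) * (2 * π * Complex.I) := by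
        push_cast; ring
      rw [h2, Complex.exp_int_mul_two_pi_mul_I]
    rw [h1, mul_one]
  have hterm : ∀ x : Fin d → Fin N,
      ((y ((fun i => (x i : ℤ)) + ρ) j : ℝ) : ℂ) * Fker d N x k
        = Complex.exp (Complex.I * ((ipk d ρ θ : ℝ) : ℂ)) * g ((fun i => (x i : ℤ)) + ρ) := by
    intro x
    simp only [hg]
    have hsum : (∑ i, ((((fun i => (x i : ℤ)) + ρ) i : ℤ) : ℝ) * θ i : ℝ)
        = (∑ i, (x i : ℝ) * θ i) + ipk d ρ θ := by
      rw [ipk, ← Finset.sum_add_distrib]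
      apply Finset.sum_congr rfl
      intro i _
      simp only [Pi.add_apply, hθ]
      push_cast
      ring
    have hF : Fker d N x k = Complex.exp (-(Complex.I * ((∑ i, (x i : ℝ) * θ i : ℝ) : ℂ))) := by
      rw [Fker, show (∑ i, (x i : ℝ) * (2 * π * (k i : ℝ) / N) : ℝ) = (∑ i, (x i : ℝ) * θ i : ℝ)
        from Finset.sum_congr rfl (fun i _ => by rw [hθ])]
    rw [hF, hsum, mul_left_comm, ← Complex.exp_add]
    congr 2
    push_cast
    ring
  have hterm2 : ∀ x : Fin d → Fin N,
      g (fun i => (x i : ℤ)) = ((y (fun i => (x i : ℤ)) j : ℝ) : ℂ) * Fker d N x k := by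
    intro x
    simp only [hg, Fker]
    have : (∑ i, (((x i : ℤ)) : ℝ) * θ i : ℝ) = (∑ i, (x i : ℝ) * (2 * π * (k i : ℝ) / N) : ℝ) := by
      apply Finset.sum_congr rfl
      intro i _
      simp only [hθ]
      push_cast
      ring
    rw [this]
  calc ∑ x : Fin d → Fin N, ((y ((fun i => (x i : ℤ)) + ρ) j : ℝ) : ℂ) * Fker d N x k
      = ∑ x : Fin d → Fin N,
          Complex.exp (Complex.I * ((ipk d ρ θ : ℝ) : ℂ)) * g ((fun i => (x i : ℤ)) + ρ) :=
        Finset.sum_congr rfl (fun x _ => hterm x)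
    _ = Complex.exp (Complex.I * ((ipk d ρ θ : ℝ) : ℂ)) *
          ∑ x : Fin d → Fin N, g ((fun i => (x i : ℤ)) + ρ) := by rw [Finset.mul_sum]
    _ = Complex.exp (Complex.I * ((ipk d ρ θ : ℝ) : ℂ)) *
          ∑ x : Fin d → Fin N, g (fun i => (x i : ℤ)) := by rw [shift_sum d N hN g hgper ρ]
    _ = _ := by rw [Finset.sum_congr rfl (fun x _ => hterm2 x)]

lemma Hmat_herm {d : ℕ} {R : Finset (Fin d → ℤ)} (K : Fin d → ↥R → Fin d → ↥R → ℝ)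
    (hsym : ∀ j ρ l σ, K j ρ l σ = K l σ j ρ) (k : Fin d → ℝ) :
    (Hmat d R K k).IsHermitian := by
  rw [Matrix.IsHermitian]
  ext j l
  rw [Matrix.conjTranspose_apply, Hmat, Hmat]
  rw [star_sum, Finset.sum_comm]
  apply Finset.sum_congr rfl
  intro ρ _
  rw [star_sum]
  apply Finset.sum_congr rfl
  intro σ _
  rw [hsym l ρ j σ]
  simp only [star_mul', star_add, star_sub, star_one, Complex.star_def, map_mul, map_add,
    map_sub, Complex.conj_I, Complex.conj_ofReal, map_neg]
  ring

lemma Hmat_periodic {d : ℕ} {R : Finset (Fin d → ℤ)} (K : Fin d → ↥R → Fin d → ↥R → ℝ) (k : Fin d → ℝ) (m : Fin d → ℤ) :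
    Hmat d R K (fun i => k i + 2 * π * (m i : ℝ)) = Hmat d R K k := by
  have hip : ∀ ρ : Fin d → ℤ, ipk d ρ (fun i => k i + 2 * π * (m i : ℝ))
      = ipk d ρ k + ((∑ i, ρ i * m i : ℤ) : ℝ) * (2 * π) := by
    intro ρ
    rw [ipk, ipk]
    push_cast
    rw [Finset.sum_mul, ← Finset.sum_add_distrib]
    apply Finset.sum_congr rfl
    intro i _
    ring
  apply Matrix.ext; intro j l
  rw [Hmat, Hmat]
  apply Finset.sum_congr rfl; intro ρ _
  apply Finset.sum_congr rfl; intro σ _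
  rw [hip, hip]
  simp only [Real.cos_add_int_mul_two_pi, Real.sin_add_int_mul_two_pi]

lemma Hmat_conj_neg {d : ℕ} {R : Finset (Fin d → ℤ)} (K : Fin d → ↥R → Fin d → ↥R → ℝ) (k : Fin d → ℝ) :
    (Hmat d R K k).map (starRingEnd ℂ) = Hmat d R K (-k) := by
  have hip : ∀ ρ : Fin d → ℤ, ipk d ρ (-k) = -ipk d ρ k := by
    intro ρ
    rw [ipk, ipk, ← Finset.sum_neg_distrib]
    apply Finset.sum_congr rfl
    intro i _
    simp only [Pi.neg_apply]
    push_cast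
    ring
  apply Matrix.ext; intro j l
  rw [Matrix.map_apply, Hmat, Hmat]
  rw [map_sum]
  apply Finset.sum_congr rfl; intro ρ _
  rw [map_sum]
  apply Finset.sum_congr rfl; intro σ _
  rw [hip, hip]
  simp only [Real.cos_neg, Real.sin_neg, map_mul, map_add, map_sub, Complex.conj_I,
    Complex.conj_ofReal]
  push_cast
  ring

lemma Hmat_real {d : ℕ} {R : Finset (Fin d → ℤ)} (hneg : ∀ ρ ∈ R, -ρ ∈ R) (K : Fin d → ↥R → Fin d → ↥R → ℝ)
    (hsym : ∀ j ρ l σ, K j ρ l σ = K l σ j ρ)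
    (hKneg : ∀ (j l : Fin d) (ρ σ : ↥R),
      K j ρ l σ = K j ⟨-ρ.1, hneg ρ.1 ρ.2⟩ l ⟨-σ.1, hneg σ.1 σ.2⟩)
    (k : Fin d → ℝ) (j l : Fin d) :
    Hmat d R K k j l =
      (((∑ ρ : ↥R, ∑ σ : ↥R, K j ρ l σ *
          ((Real.cos (ipk d ρ.1 k) - 1) * (Real.cos (ipk d σ.1 k) - 1) +
            Real.sin (ipk d ρ.1 k) * Real.sin (ipk d σ.1 k)) : ℝ)) : ℂ) ∧
    Hmat d R K k j l = Hmat d R K k l j := by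
  have hip : ∀ ρ : Fin d → ℤ, ipk d (-ρ) k = -ipk d ρ k := by
    intro ρ
    rw [ipk, ipk, ← Finset.sum_neg_distrib]
    apply Finset.sum_congr rfl
    intro i _
    simp only [Pi.neg_apply]
    push_cast
    ring
  set e : ↥R ≃ ↥R :=
    ⟨fun ρ => ⟨-ρ.1, hneg ρ.1 ρ.2⟩, fun ρ => ⟨-ρ.1, hneg ρ.1 ρ.2⟩,
      fun ρ => by simp, fun ρ => by simp⟩ with he
  have h1 : Hmat d R K k j l = ∑ ρ : ↥R, ∑ σ : ↥R,
      ((K j ρ l σ : ℝ) : ℂ) *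
        (((Real.cos (ipk d ρ.1 k) - 1 : ℝ) : ℂ) -
          Complex.I * ((Real.sin (ipk d ρ.1 k) : ℝ) : ℂ)) *
        (((Real.cos (ipk d σ.1 k) - 1 : ℝ) : ℂ) +
          Complex.I * ((Real.sin (ipk d σ.1 k) : ℝ) : ℂ)) := by
    rw [Hmat]
    rw [← Equiv.sum_comp e]
    apply Finset.sum_congr rfl; intro ρ _
    rw [← Equiv.sum_comp e]
    apply Finset.sum_congr rfl; intro σ _
    simp only [he, Equiv.coe_fn_mk]
    rw [← hKneg, hip, hip]
    simp only [Real.cos_neg, Real.sin_neg]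
    push_cast
    ring
  have hformula : Hmat d R K k j l =
      (((∑ ρ : ↥R, ∑ σ : ↥R, K j ρ l σ *
          ((Real.cos (ipk d ρ.1 k) - 1) * (Real.cos (ipk d σ.1 k) - 1) +
            Real.sin (ipk d ρ.1 k) * Real.sin (ipk d σ.1 k)) : ℝ)) : ℂ) := by
    have h2 : (2 : ℂ) * Hmat d R K k j l =
        (2 : ℂ) * (((∑ ρ : ↥R, ∑ σ : ↥R, K j ρ l σ *
          ((Real.cos (ipk d ρ.1 k) - 1) * (Real.cos (ipk d σ.1 k) - 1) +
            Real.sin (ipk d ρ.1 k) * Real.sin (ipk d σ.1 k)) : ℝ)) : ℂ) := by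
      rw [two_mul]
      nth_rewrite 2 [h1]
      rw [Hmat]
      push_cast
      rw [← Finset.sum_add_distrib, Finset.mul_sum]
      apply Finset.sum_congr rfl; intro ρ _
      rw [← Finset.sum_add_distrib, Finset.mul_sum]
      apply Finset.sum_congr rfl; intro σ _
      have hI := Complex.I_sq
      linear_combination (-2 * ((K j ρ l σ : ℝ) : ℂ) *
        Complex.sin ((ipk d ρ.1 k : ℝ) : ℂ) * Complex.sin ((ipk d σ.1 k : ℝ) : ℂ)) * hI
    exact mul_left_cancel₀ two_ne_zero h2
  refine ⟨hformula, ?_⟩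
  have hherm := Hmat_herm K hsym k
  have hc := congrFun (congrFun hherm l) j
  rw [Matrix.conjTranspose_apply] at hc
  rw [← hc, hformula]
  exact (Complex.conj_ofReal _).symm

lemma sum_comm5 {κ A B C D : Type*} [Fintype κ] [Fintype A] [Fintype B] [Fintype C]
    [Fintype D] (f : κ → A → B → C → D → ℂ) :
    ∑ k : κ, ∑ a : A, ∑ b : B, ∑ c : C, ∑ e : D, f k a b c e
      = ∑ a : A, ∑ b : B, ∑ c : C, ∑ e : D, ∑ k : κ, f k a b c e := by
  rw [Finset.sum_comm]
  apply Finset.sum_congr rfl; intro a _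
  rw [Finset.sum_comm]
  apply Finset.sum_congr rfl; intro b _
  rw [Finset.sum_comm]
  apply Finset.sum_congr rfl; intro c _
  rw [Finset.sum_comm]

theorem main_id (d N : ℕ) (hN : 0 < N)
    (R : Finset (Fin d → ℤ))
    (K : Fin d → ↥R → Fin d → ↥R → ℝ)
    (y : (Fin d → ℤ) → (Fin d → ℝ))
    (hper : ∀ x z : Fin d → ℤ, y (x + N • z) = y x) :
    ((((∑ x : Fin d → Fin N, ∑ j, ∑ l, ∑ ρ : ↥R, ∑ σ : ↥R,
        K j ρ l σ * (y ((fun i => (x i : ℤ)) + ρ.1) j - y (fun i => (x i : ℤ)) j) *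
          (y ((fun i => (x i : ℤ)) + σ.1) l - y (fun i => (x i : ℤ)) l) : ℝ)) : ℂ) =
      ((N : ℂ)) ^ d * ∑ k : Fin d → Fin N, ∑ j, ∑ l,
        (((((N : ℂ)) ^ d)⁻¹ * ∑ x : Fin d → Fin N,
            ((y (fun i => (x i : ℤ)) j : ℝ) : ℂ) *
              Complex.exp (-(Complex.I *
                ((∑ i, (x i : ℝ) * (2 * π * (k i : ℝ) / N) : ℝ) : ℂ)))) *
          Hmat d R K (fun i => 2 * π * (k i : ℝ) / N) j l *
          (starRingEnd ℂ) ((((N : ℂ)) ^ d)⁻¹ * ∑ x : Fin d → Fin N,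
            ((y (fun i => (x i : ℤ)) l : ℝ) : ℂ) *
              Complex.exp (-(Complex.I *
                ((∑ i, (x i : ℝ) * (2 * π * (k i : ℝ) / N) : ℝ) : ℂ)))))) := by
  have hFk : ∀ (x k : Fin d → Fin N),
      Complex.exp (-(Complex.I * ((∑ i, (x i : ℝ) * (2 * π * (k i : ℝ) / N) : ℝ) : ℂ)))
        = Fker d N x k := fun _ _ => rfl
  simp only [hFk]
  set E : ↥R → (Fin d → Fin N) → ℂ := fun ρ k =>
    Complex.exp (Complex.I * ((ipk d ρ.1 (fun i => 2 * π * (k i : ℝ) / N) : ℝ) : ℂ)) - 1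
    with hE
  set yh : Fin d → (Fin d → Fin N) → ℂ := fun j k =>
    ((((N : ℂ)) ^ d)⁻¹ * ∑ x : Fin d → Fin N, ((y (fun i => (x i : ℤ)) j : ℝ) : ℂ) * Fker d N x k)
    with hyhdef
  have hyh : ∀ (j : Fin d) (k : Fin d → Fin N),
      ((((N : ℂ)) ^ d)⁻¹ * ∑ x : Fin d → Fin N,
        ((y (fun i => (x i : ℤ)) j : ℝ) : ℂ) * Fker d N x k) = yh j k := fun _ _ => rfl
  simp only [hyh]
  -- step 2 : Fourier transform of differences
  have step2 : ∀ (j : Fin d) (ρ : ↥R) (k : Fin d → Fin N),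
      ((((N : ℂ)) ^ d)⁻¹ * ∑ x : Fin d → Fin N,
          (((y ((fun i => (x i : ℤ)) + ρ.1) j - y (fun i => (x i : ℤ)) j : ℝ)) : ℂ) * Fker d N x k)
        = E ρ k * yh j k := by
    intro j ρ k
    have expand : (∑ x : Fin d → Fin N,
        (((y ((fun i => (x i : ℤ)) + ρ.1) j - y (fun i => (x i : ℤ)) j : ℝ)) : ℂ) * Fker d N x k)
        = (∑ x : Fin d → Fin N, ((y ((fun i => (x i : ℤ)) + ρ.1) j : ℝ) : ℂ) * Fker d N x k)
          - ∑ x : Fin d → Fin N, ((y (fun i => (x i : ℤ)) j : ℝ) : ℂ) * Fker d N x k := by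
      rw [← Finset.sum_sub_distrib]
      apply Finset.sum_congr rfl
      intro x _
      push_cast
      ring
    rw [expand, hat_shift d N hN y hper j ρ.1 k, hE, hyhdef]
    ring
  -- step 3 : per (j,l,ρ,σ)
  have step3 : ∀ (j l : Fin d) (ρ σ : ↥R),
      (∑ x : Fin d → Fin N,
        ((K j ρ l σ : ℝ) : ℂ) *
          (((y ((fun i => (x i : ℤ)) + ρ.1) j : ℝ) : ℂ) - ((y (fun i => (x i : ℤ)) j : ℝ) : ℂ)) *
          (((y ((fun i => (x i : ℤ)) + σ.1) l : ℝ) : ℂ) - ((y (fun i => (x i : ℤ)) l : ℝ) : ℂ)))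
        = ∑ k : Fin d → Fin N, ((N : ℂ)) ^ d *
            (((K j ρ l σ : ℝ) : ℂ) * (E ρ k * yh j k) * (starRingEnd ℂ) (E σ k * yh l k)) := by
    intro j l ρ σ
    have h1 : (∑ x : Fin d → Fin N,
        ((K j ρ l σ : ℝ) : ℂ) *
          (((y ((fun i => (x i : ℤ)) + ρ.1) j : ℝ) : ℂ) - ((y (fun i => (x i : ℤ)) j : ℝ) : ℂ)) *
          (((y ((fun i => (x i : ℤ)) + σ.1) l : ℝ) : ℂ) - ((y (fun i => (x i : ℤ)) l : ℝ) : ℂ)))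
        = ((K j ρ l σ : ℝ) : ℂ) * ∑ x : Fin d → Fin N,
            (((y ((fun i => (x i : ℤ)) + ρ.1) j - y (fun i => (x i : ℤ)) j : ℝ)) : ℂ) *
            (((y ((fun i => (x i : ℤ)) + σ.1) l - y (fun i => (x i : ℤ)) l : ℝ)) : ℂ) := by
      rw [Finset.mul_sum]
      apply Finset.sum_congr rfl
      intro x _
      push_cast
      ring
    rw [h1, parseval d N hN
      (fun x => y ((fun i => (x i : ℤ)) + ρ.1) j - y (fun i => (x i : ℤ)) j)
      (fun x => y ((fun i => (x i : ℤ)) + σ.1) l - y (fun i => (x i : ℤ)) l)]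
    simp only [step2 j ρ, step2 l σ]
    rw [Finset.mul_sum, Finset.mul_sum]
    apply Finset.sum_congr rfl
    intro k _
    ring
  -- assemble
  push_cast
  rw [sum_comm5 (fun (x : Fin d → Fin N) (j : Fin d) (l : Fin d) (ρ : ↥R) (σ : ↥R) =>
    ((K j ρ l σ : ℝ) : ℂ) *
      (((y ((fun i => (x i : ℤ)) + ρ.1) j : ℝ) : ℂ) - ((y (fun i => (x i : ℤ)) j : ℝ) : ℂ)) *
      (((y ((fun i => (x i : ℤ)) + σ.1) l : ℝ) : ℂ) - ((y (fun i => (x i : ℤ)) l : ℝ) : ℂ)))]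
  calc (∑ j, ∑ l, ∑ ρ : ↥R, ∑ σ : ↥R, ∑ x : Fin d → Fin N,
        ((K j ρ l σ : ℝ) : ℂ) *
          (((y ((fun i => (x i : ℤ)) + ρ.1) j : ℝ) : ℂ) - ((y (fun i => (x i : ℤ)) j : ℝ) : ℂ)) *
          (((y ((fun i => (x i : ℤ)) + σ.1) l : ℝ) : ℂ) - ((y (fun i => (x i : ℤ)) l : ℝ) : ℂ)))
      = ∑ j, ∑ l, ∑ ρ : ↥R, ∑ σ : ↥R, ∑ k : Fin d → Fin N, ((N : ℂ)) ^ d *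
          (((K j ρ l σ : ℝ) : ℂ) * (E ρ k * yh j k) * (starRingEnd ℂ) (E σ k * yh l k)) := by
        apply Finset.sum_congr rfl; intro j _
        apply Finset.sum_congr rfl; intro l _
        apply Finset.sum_congr rfl; intro ρ _
        apply Finset.sum_congr rfl; intro σ _
        exact step3 j l ρ σ
    _ = ∑ k : Fin d → Fin N, ∑ j, ∑ l, ∑ ρ : ↥R, ∑ σ : ↥R, ((N : ℂ)) ^ d *
          (((K j ρ l σ : ℝ) : ℂ) * (E ρ k * yh j k) * (starRingEnd ℂ) (E σ k * yh l k)) :=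
        (sum_comm5 (fun (k : Fin d → Fin N) (j : Fin d) (l : Fin d) (ρ : ↥R) (σ : ↥R) =>
          ((N : ℂ)) ^ d *
            (((K j ρ l σ : ℝ) : ℂ) * (E ρ k * yh j k) * (starRingEnd ℂ) (E σ k * yh l k)))).symm
    _ = ((N : ℂ)) ^ d * ∑ k : Fin d → Fin N, ∑ j, ∑ l,
          yh j k * Hmat d R K (fun i => 2 * π * (k i : ℝ) / N) j l * (starRingEnd ℂ) (yh l k) := by
        rw [Finset.mul_sum]
        apply Finset.sum_congr rfl; intro k _
        rw [Finset.mul_sum]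
        apply Finset.sum_congr rfl; intro j _
        rw [Finset.mul_sum]
        apply Finset.sum_congr rfl; intro l _
        -- expand Hmat
        have stepH : Hmat d R K (fun i => 2 * π * (k i : ℝ) / N) j l
            = ∑ ρ : ↥R, ∑ σ : ↥R,
                ((K j ρ l σ : ℝ) : ℂ) * E ρ k * (starRingEnd ℂ) (E σ k) := by
          rw [Hmat]
          apply Finset.sum_congr rfl; intro ρ _
          apply Finset.sum_congr rfl; intro σ _
          have hEexp : ∀ t : ℝ, Complex.exp (Complex.I * ((t : ℝ) : ℂ)) - 1
              = ((Real.cos t - 1 : ℝ) : ℂ) + Complex.I * ((Real.sin t : ℝ) : ℂ) := by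
            intro t
            rw [mul_comm, Complex.exp_mul_I]
            push_cast
            ring
          have hconjE : (starRingEnd ℂ) (E σ k)
              = ((Real.cos (ipk d σ.1 (fun i => 2 * π * (k i : ℝ) / N)) - 1 : ℝ) : ℂ)
                - Complex.I * ((Real.sin (ipk d σ.1 (fun i => 2 * π * (k i : ℝ) / N)) : ℝ) : ℂ) := by
            rw [hE]
            simp only [map_sub, map_one, ← Complex.exp_conj, map_mul, Complex.conj_I,
              Complex.conj_ofReal]
            rw [show -Complex.I * ((ipk d σ.1 (fun i => 2 * π * (k i : ℝ) / N) : ℝ) : ℂ)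
              = Complex.I * (((-(ipk d σ.1 (fun i => 2 * π * (k i : ℝ) / N)) : ℝ)) : ℂ) by
                push_cast; ring]
            rw [hEexp]
            simp only [Real.cos_neg, Real.sin_neg]
            push_cast
            ring
          rw [hconjE, hE]
          simp only []
          rw [hEexp]
        rw [stepH, Finset.mul_sum, Finset.sum_mul, Finset.mul_sum]
        apply Finset.sum_congr rfl; intro ρ _
        rw [Finset.mul_sum, Finset.sum_mul, Finset.mul_sum]
        apply Finset.sum_congr rfl; intro σ _
        rw [map_mul]
        ring

/-- Fourier diagonalization of the discrete quadratic form: for a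
symmetric `K` and `[0,N)^d`-periodic `y`,
`Σ_x K[Dy(x),Dy(x)] = N^d Σ_k ŷ(k)ᵀ H(k) conj(ŷ(k))`; moreover `H(k)` is
Hermitian, `2π`-periodic, `conj H(k) = H(−k)`, and under the additional
symmetry `K_{jρlσ} = K_{j(−ρ)l(−σ)}` it is real symmetric with the stated
formula. -/
theorem fourier_diagonalization
    (d N : ℕ) (hd : 0 < d) (hN : 0 < N)
    (R : Finset (Fin d → ℤ)) (h0 : (0 : Fin d → ℤ) ∉ R)
    (hneg : ∀ ρ ∈ R, -ρ ∈ R)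
    (K : Fin d → ↥R → Fin d → ↥R → ℝ)
    (hsym : ∀ j ρ l σ, K j ρ l σ = K l σ j ρ)
    (y : (Fin d → ℤ) → (Fin d → ℝ))
    (hper : ∀ x z : Fin d → ℤ, y (x + N • z) = y x) :
    ((((∑ x : Fin d → Fin N, ∑ j, ∑ l, ∑ ρ : ↥R, ∑ σ : ↥R,
        K j ρ l σ * (y ((fun i => (x i : ℤ)) + ρ.1) j - y (fun i => (x i : ℤ)) j) *
          (y ((fun i => (x i : ℤ)) + σ.1) l - y (fun i => (x i : ℤ)) l) : ℝ)) : ℂ) =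
      ((N : ℂ)) ^ d * ∑ k : Fin d → Fin N, ∑ j, ∑ l,
        (((((N : ℂ)) ^ d)⁻¹ * ∑ x : Fin d → Fin N,
            ((y (fun i => (x i : ℤ)) j : ℝ) : ℂ) *
              Complex.exp (-(Complex.I *
                ((∑ i, (x i : ℝ) * (2 * π * (k i : ℝ) / N) : ℝ) : ℂ)))) *
          Hmat d R K (fun i => 2 * π * (k i : ℝ) / N) j l *
          (starRingEnd ℂ) ((((N : ℂ)) ^ d)⁻¹ * ∑ x : Fin d → Fin N,
            ((y (fun i => (x i : ℤ)) l : ℝ) : ℂ) *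
              Complex.exp (-(Complex.I *
                ((∑ i, (x i : ℝ) * (2 * π * (k i : ℝ) / N) : ℝ) : ℂ)))))) ∧
    (∀ k : Fin d → ℝ, (Hmat d R K k).IsHermitian) ∧
    (∀ (k : Fin d → ℝ) (m : Fin d → ℤ),
      Hmat d R K (fun i => k i + 2 * π * (m i : ℝ)) = Hmat d R K k) ∧
    (∀ k : Fin d → ℝ, (Hmat d R K k).map (starRingEnd ℂ) = Hmat d R K (-k)) ∧
    ((∀ (j l : Fin d) (ρ σ : ↥R),
        K j ρ l σ = K j ⟨-ρ.1, hneg ρ.1 ρ.2⟩ l ⟨-σ.1, hneg σ.1 σ.2⟩) →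
      ∀ (k : Fin d → ℝ) (j l : Fin d),
        Hmat d R K k j l =
          (((∑ ρ : ↥R, ∑ σ : ↥R, K j ρ l σ *
              ((Real.cos (ipk d ρ.1 k) - 1) * (Real.cos (ipk d σ.1 k) - 1) +
                Real.sin (ipk d ρ.1 k) * Real.sin (ipk d σ.1 k)) : ℝ)) : ℂ) ∧
        Hmat d R K k j l = Hmat d R K k l j) := by
  refine ⟨?_, ?_, ?_, ?_, ?_⟩
  · exact main_id d N hN R K y hper
  · exact fun k => Hmat_herm K hsym k
  · exact fun k m => Hmat_periodic K k m
  · exact fun k => Hmat_conj_neg K k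
  · intro hKneg k j l
    exact Hmat_real hneg K hsym hKneg k j l

end
end

section
/- Quantitative implicit function theorem: Let X be Banach, Y, Z normed, U ⊂ X, V ⊂ Y open, F : U×V → Z Fréchet differentiable, ∂_u F(0,0) invertible. Suppose there are ρ,τ,κ₁,κ₂,κ₃ > 0 and a function ω : [0,∞)² → [0,∞] nondecreasing in both variables with closed balls B̄_ρ(0) ⊂ U, B̄_τ(0) ⊂ V such that ‖F(0,0)‖ ≤ κ₁, ‖∂_u F(0,0)^{-1}‖ ≤ κ₂, ‖∂_h F(u,h)‖ ≤ κ₃ and ‖∂_u F(0,0) − ∂_u F(u,h)‖ ≤ ω(‖u‖,‖h‖) on B̄_ρ(0)×B̄_τ(0), κ₂ω(ρ,τ) < 1, and κ₂(κ₁ + κ₃τ + ∫₀^ρ ω(t, (τ/ρ)t)dt) ≤ ρ. Then for every h ∈ B̄_τ(0) there is a unique u ∈ B̄_ρ(0) with F(u,h) = 0. -/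
set_option maxHeartbeats 1000000

private theorem aux_op_bound {Z X W : Type*}
    [NormedAddCommGroup Z] [NormedSpace ℝ Z]
    [NormedAddCommGroup X] [NormedSpace ℝ X]
    [NormedAddCommGroup W] [NormedSpace ℝ W]
    (Ai : Z →L[ℝ] X) (T : W →L[ℝ] Z) (w : W) (κ ν r : ℝ)
    (h1 : ‖Ai‖ ≤ κ) (h2 : ‖T‖ ≤ ν) (h3 : ‖w‖ ≤ r)
    (hκ : 0 ≤ κ) (hν : 0 ≤ ν) : ‖Ai (T w)‖ ≤ κ * (ν * r) := by
  calc ‖Ai (T w)‖ ≤ ‖Ai‖ * ‖T w‖ := Ai.le_opNorm _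
    _ ≤ κ * (ν * r) := by
        refine mul_le_mul h1 ?_ (norm_nonneg _) hκ
        calc ‖T w‖ ≤ ‖T‖ * ‖w‖ := T.le_opNorm w
          _ ≤ ν * r := mul_le_mul h2 h3 (norm_nonneg _) hν

open Metric MeasureTheory

/-- quantitative implicit function theorem. With quantitative
bounds `κ₁` on the residual `‖F(0,0)‖`, `κ₂` on the inverse of `∂_u F(0,0)`,
`κ₃` on `∂_h F`, a modulus `ω` controlling `∂_u F(0,0) − ∂_u F(u,h)`, the
smallness conditions `κ₂ ω(ρ,τ) < 1` and
`κ₂(κ₁ + κ₃τ + ∫₀^ρ ω(t,(τ/ρ)t) dt) ≤ ρ` imply: for every `h ∈ B̄_τ(0)` there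
is a unique `u ∈ B̄_ρ(0)` with `F(u,h) = 0`. -/
theorem quantitative_implicit_function_theorem
    {X Y Z : Type*}
    [NormedAddCommGroup X] [NormedSpace ℝ X] [CompleteSpace X]
    [NormedAddCommGroup Y] [NormedSpace ℝ Y]
    [NormedAddCommGroup Z] [NormedSpace ℝ Z]
    (U : Set X) (V : Set Y) (hUo : IsOpen U) (hVo : IsOpen V)
    (F : X × Y → Z) (DF : X × Y → (X × Y →L[ℝ] Z))
    (hF : ∀ p ∈ U ×ˢ V, HasFDerivAt F (DF p) p)
    (A : X ≃L[ℝ] Z)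
    (hA : (DF (0, 0)).comp (ContinuousLinearMap.inl ℝ X Y) =
      (A : X →L[ℝ] Z))
    (ρ τ κ₁ κ₂ κ₃ : ℝ) (hρ : 0 < ρ) (hτ : 0 < τ)
    (hκ₁pos : 0 < κ₁) (hκ₂pos : 0 < κ₂) (hκ₃pos : 0 < κ₃)
    (ω : ℝ → ℝ → ℝ)
    (hωnonneg : ∀ s t, 0 ≤ ω s t)
    (hωmono : ∀ s s' t t', 0 ≤ s → s ≤ s' → 0 ≤ t → t ≤ t' →
      ω s t ≤ ω s' t')
    (hU : closedBall (0 : X) ρ ⊆ U) (hV : closedBall (0 : Y) τ ⊆ V)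
    (hκ₁ : ‖F (0, 0)‖ ≤ κ₁)
    (hκ₂ : ‖(A.symm : Z →L[ℝ] X)‖ ≤ κ₂)
    (hκ₃ : ∀ u h, ‖u‖ ≤ ρ → ‖h‖ ≤ τ →
      ‖(DF (u, h)).comp (ContinuousLinearMap.inr ℝ X Y)‖ ≤ κ₃)
    (hω : ∀ u h, ‖u‖ ≤ ρ → ‖h‖ ≤ τ →
      ‖(DF (0, 0)).comp (ContinuousLinearMap.inl ℝ X Y) -
          (DF (u, h)).comp (ContinuousLinearMap.inl ℝ X Y)‖ ≤ ω ‖u‖ ‖h‖)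
    (hcontr : κ₂ * ω ρ τ < 1)
    (hball : κ₂ * (κ₁ + κ₃ * τ + ∫ t in (0 : ℝ)..ρ, ω t (τ / ρ * t)) ≤ ρ) :
    ∀ h ∈ closedBall (0 : Y) τ,
      ∃! u, u ∈ closedBall (0 : X) ρ ∧ F (u, h) = 0 := by
  intro h hh
  rw [mem_closedBall, dist_zero_right] at hh
  have hκ₂0 : (0:ℝ) ≤ κ₂ := le_of_lt hκ₂pos
  set Ai : Z →L[ℝ] X := (A.symm : Z →L[ℝ] X) with hAi
  set B : X →L[ℝ] Z := (DF (0, 0)).comp (ContinuousLinearMap.inl ℝ X Y) with hB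
  have hABi : Ai.comp B = ContinuousLinearMap.id ℝ X := by
    rw [hA]
    ext x
    simp [hAi]
  have hAB_pt : ∀ x : X, Ai (B x) = x := by
    intro x
    have := congrArg (fun (T : X →L[ℝ] X) => T x) hABi
    simpa using this
  set g : X → X := fun u => u - Ai (F (u, h)) with hg
  have hmemU : ∀ u : X, ‖u‖ ≤ ρ → (u, h) ∈ U ×ˢ V := by
    intro u hu
    exact Set.mk_mem_prod (hU (by simpa [mem_closedBall, dist_zero_right] using hu))
      (hV (by simpa [mem_closedBall, dist_zero_right] using hh))
  set g' : X → (X →L[ℝ] X) := fun u =>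
    ContinuousLinearMap.id ℝ X -
      Ai.comp ((DF (u, h)).comp (ContinuousLinearMap.inl ℝ X Y)) with hg'
  have hgd : ∀ u : X, ‖u‖ ≤ ρ → HasFDerivAt g (g' u) u := by
    intro u hu
    have h1 : HasFDerivAt (fun u : X => (u, h)) (ContinuousLinearMap.inl ℝ X Y) u :=
      hasFDerivAt_prodMk_left u h
    have h2 : HasFDerivAt (fun u : X => F (u, h))
        ((DF (u, h)).comp (ContinuousLinearMap.inl ℝ X Y)) u :=
      (hF (u, h) (hmemU u hu)).comp u h1
    have h3 : HasFDerivAt (fun u : X => Ai (F (u, h)))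
        (Ai.comp ((DF (u, h)).comp (ContinuousLinearMap.inl ℝ X Y))) u :=
      (Ai.hasFDerivAt).comp u h2
    exact (hasFDerivAt_id u).sub h3
  have hg'norm : ∀ u : X, ‖u‖ ≤ ρ → ‖g' u‖ ≤ κ₂ * ω ρ τ := by
    intro u hu
    have heq : g' u = Ai.comp (B - (DF (u, h)).comp (ContinuousLinearMap.inl ℝ X Y)) := by
      rw [hg', ContinuousLinearMap.comp_sub, hABi]
    rw [heq]
    calc ‖Ai.comp (B - (DF (u, h)).comp (ContinuousLinearMap.inl ℝ X Y))‖
        ≤ ‖Ai‖ * ‖B - (DF (u, h)).comp (ContinuousLinearMap.inl ℝ X Y)‖ :=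
          ContinuousLinearMap.opNorm_comp_le _ _
      _ ≤ κ₂ * ω ρ τ := by
          refine mul_le_mul hκ₂ ?_ (norm_nonneg _) hκ₂0
          exact (hω u h hu hh).trans
            (hωmono _ _ _ _ (norm_nonneg _) hu (norm_nonneg _) hh)
  have hlip : ∀ u v : X, ‖u‖ ≤ ρ → ‖v‖ ≤ ρ → ‖g u - g v‖ ≤ (κ₂ * ω ρ τ) * ‖u - v‖ := by
    intro u v hu hv
    refine (convex_closedBall (0:X) ρ).norm_image_sub_le_of_norm_hasFDerivWithin_le
      (f := g) (f' := g')
      (fun x hx => (hgd x (by simpa [mem_closedBall, dist_zero_right] using hx)).hasFDerivWithinAt)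
      (fun x hx => hg'norm x (by simpa [mem_closedBall, dist_zero_right] using hx))
      ?_ ?_
    · simpa [mem_closedBall, dist_zero_right] using hv
    · simpa [mem_closedBall, dist_zero_right] using hu
  -- self-map estimate
  have hself : ∀ u : X, ‖u‖ ≤ ρ → ‖g u‖ ≤ ρ := by
    intro u hu
    set c : ℝ → X := fun t => t • u - Ai (F (t • u, t • h)) with hc
    set c' : ℝ → X := fun t => u - Ai ((DF (t • u, t • h)) (u, h)) with hc'
    have hnorms : ∀ t : ℝ, t ∈ Set.Icc (0:ℝ) 1 → ‖t • u‖ ≤ ρ ∧ ‖t • h‖ ≤ τ := by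
      intro t ht
      have h1 : ‖t • u‖ = t * ‖u‖ := by
        rw [norm_smul, Real.norm_eq_abs, abs_of_nonneg ht.1]
      have h2 : ‖t • h‖ = t * ‖h‖ := by
        rw [norm_smul, Real.norm_eq_abs, abs_of_nonneg ht.1]
      constructor
      · rw [h1]; nlinarith [ht.1, ht.2, norm_nonneg u]
      · rw [h2]; nlinarith [ht.1, ht.2, norm_nonneg h]
    have hcd : ∀ t : ℝ, t ∈ Set.Icc (0:ℝ) 1 → HasDerivAt c (c' t) t := by
      intro t ht
      obtain ⟨htu, hth⟩ := hnorms t ht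
      have h1 : HasDerivAt (fun t : ℝ => t • u) u t := by
        simpa using (hasDerivAt_id t).smul_const u
      have h2 : HasDerivAt (fun t : ℝ => t • h) h t := by
        simpa using (hasDerivAt_id t).smul_const h
      have h3 : HasDerivAt (fun t : ℝ => ((t • u, t • h) : X × Y)) ((u, h) : X × Y) t :=
        h1.prodMk h2
      have hmem : ((t • u, t • h) : X × Y) ∈ U ×ˢ V :=
        Set.mk_mem_prod (hU (by simpa [mem_closedBall, dist_zero_right] using htu))
          (hV (by simpa [mem_closedBall, dist_zero_right] using hth))
      have h4 : HasDerivAt (fun t : ℝ => F (t • u, t • h))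
          ((DF (t • u, t • h)) (u, h)) t :=
        (hF _ hmem).comp_hasDerivAt t h3
      have h5 : HasDerivAt (fun t : ℝ => Ai (F (t • u, t • h)))
          (Ai ((DF (t • u, t • h)) (u, h))) t :=
        Ai.hasFDerivAt.comp_hasDerivAt t h4
      exact h1.sub h5
    set φ : ℝ → ℝ := fun t => κ₂ * ρ * ω (ρ * t) (τ / ρ * (ρ * t)) + κ₂ * (κ₃ * τ) with hφ
    have hφnonneg : ∀ t : ℝ, 0 ≤ φ t := by
      intro t
      have := hωnonneg (ρ * t) (τ / ρ * (ρ * t))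
      have h1 : (0:ℝ) ≤ κ₂ * ρ := mul_nonneg hκ₂0 hρ.le
      have h2 : (0:ℝ) ≤ κ₂ * (κ₃ * τ) := by positivity
      have h3 := mul_nonneg h1 this
      show 0 ≤ κ₂ * ρ * ω (ρ * t) (τ / ρ * (ρ * t)) + κ₂ * (κ₃ * τ)
      linarith
    have hcb : ∀ t : ℝ, t ∈ Set.Icc (0:ℝ) 1 → ‖c' t‖ ≤ φ t := by
      intro t ht
      obtain ⟨htu, hth⟩ := hnorms t ht
      have hsum : (DF (t • u, t • h)) (u, h)
          = ((DF (t • u, t • h)).comp (ContinuousLinearMap.inl ℝ X Y)) u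
            + ((DF (t • u, t • h)).comp (ContinuousLinearMap.inr ℝ X Y)) h := by
        rw [ContinuousLinearMap.comp_apply, ContinuousLinearMap.comp_apply, ← map_add]
        simp
      have split : c' t
          = Ai ((B - (DF (t • u, t • h)).comp (ContinuousLinearMap.inl ℝ X Y)) u)
            - Ai (((DF (t • u, t • h)).comp (ContinuousLinearMap.inr ℝ X Y)) h) := by
        rw [hc']
        simp only [ContinuousLinearMap.sub_apply, map_sub, hsum, map_add, hAB_pt u]
        abel
      have hω1 : ‖B - (DF (t • u, t • h)).comp (ContinuousLinearMap.inl ℝ X Y)‖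
          ≤ ω (ρ * t) (τ / ρ * (ρ * t)) := by
        refine (hω (t • u) (t • h) htu hth).trans ?_
        have e1 : ‖t • u‖ ≤ ρ * t := by
          rw [norm_smul, Real.norm_eq_abs, abs_of_nonneg ht.1]
          nlinarith [mul_nonneg ht.1 (sub_nonneg.2 hu)]
        have e2 : ‖t • h‖ ≤ τ / ρ * (ρ * t) := by
          rw [norm_smul, Real.norm_eq_abs, abs_of_nonneg ht.1]
          have e3 : τ / ρ * (ρ * t) = τ * t := by field_simp
          rw [e3]
          nlinarith [mul_nonneg ht.1 (sub_nonneg.2 hh)]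
        exact hωmono _ _ _ _ (norm_nonneg _) e1 (norm_nonneg _) e2
      have b1 : ‖Ai ((B - (DF (t • u, t • h)).comp (ContinuousLinearMap.inl ℝ X Y)) u)‖
          ≤ κ₂ * ρ * ω (ρ * t) (τ / ρ * (ρ * t)) := by
        refine le_of_le_of_eq (aux_op_bound Ai _ u κ₂ (ω (ρ * t) (τ / ρ * (ρ * t))) ρ
          hκ₂ hω1 hu hκ₂0 (hωnonneg _ _)) (by ring)
      have b2 : ‖Ai (((DF (t • u, t • h)).comp (ContinuousLinearMap.inr ℝ X Y)) h)‖
          ≤ κ₂ * (κ₃ * τ) :=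
        aux_op_bound Ai _ h κ₂ κ₃ τ hκ₂ (hκ₃ (t • u) (t • h) htu hth) hh hκ₂0 hκ₃pos.le
      calc ‖c' t‖ ≤ ‖Ai ((B - (DF (t • u, t • h)).comp (ContinuousLinearMap.inl ℝ X Y)) u)‖
            + ‖Ai (((DF (t • u, t • h)).comp (ContinuousLinearMap.inr ℝ X Y)) h)‖ := by
            rw [split]; exact norm_sub_le _ _
        _ ≤ φ t := add_le_add b1 b2
    -- integrability
    have hmono : MonotoneOn (fun t => ω (ρ * t) (τ / ρ * (ρ * t))) (Set.uIcc (0:ℝ) 1) := by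
      rw [Set.uIcc_of_le zero_le_one]
      intro a ha b hb hab
      have h1 : 0 ≤ ρ * a := mul_nonneg hρ.le ha.1
      have h2 : ρ * a ≤ ρ * b := mul_le_mul_of_nonneg_left hab hρ.le
      have h3 : 0 ≤ τ / ρ * (ρ * a) := mul_nonneg (div_nonneg hτ.le hρ.le) h1
      have h4 : τ / ρ * (ρ * a) ≤ τ / ρ * (ρ * b) :=
        mul_le_mul_of_nonneg_left h2 (div_nonneg hτ.le hρ.le)
      exact hωmono _ _ _ _ h1 h2 h3 h4
    have hωint : IntervalIntegrable (fun t => ω (ρ * t) (τ / ρ * (ρ * t))) volume 0 1 :=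
      hmono.intervalIntegrable
    have hφint : IntervalIntegrable φ volume 0 1 := by
      rw [hφ]
      exact (hωint.const_mul (κ₂ * ρ)).add intervalIntegrable_const
    have hderiv_eq : ∀ t ∈ Set.Icc (0:ℝ) 1, deriv c t = c' t := fun t ht => (hcd t ht).deriv
    have hintc : IntervalIntegrable (deriv c) volume 0 1 := by
      rw [intervalIntegrable_iff_integrableOn_Ioc_of_le zero_le_one]
      have hφ' : IntegrableOn φ (Set.Ioc (0:ℝ) 1) volume :=
        (intervalIntegrable_iff_integrableOn_Ioc_of_le zero_le_one).1 hφint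
      refine hφ'.mono' ((stronglyMeasurable_deriv c).aestronglyMeasurable.restrict) ?_
      refine (ae_restrict_iff' measurableSet_Ioc).2 (Filter.Eventually.of_forall ?_)
      intro t ht
      rw [hderiv_eq t (Set.Ioc_subset_Icc_self ht)]
      exact hcb t (Set.Ioc_subset_Icc_self ht)
    have hFTC : ∫ t in (0:ℝ)..1, deriv c t = c 1 - c 0 := by
      refine intervalIntegral.integral_eq_sub_of_hasDerivAt ?_ hintc
      intro t ht
      have ht' : t ∈ Set.Icc (0:ℝ) 1 := by rwa [Set.uIcc_of_le zero_le_one] at ht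
      rw [hderiv_eq t ht']
      exact hcd t ht'
    have hbnd : ‖c 1 - c 0‖ ≤ ∫ t in (0:ℝ)..1, φ t := by
      rw [← hFTC]
      have hae : ∀ᵐ t ∂(volume.restrict (Set.uIoc (0:ℝ) 1)), ‖deriv c t‖ ≤ φ t := by
        rw [Set.uIoc_of_le zero_le_one]
        refine (ae_restrict_iff' measurableSet_Ioc).2 (Filter.Eventually.of_forall ?_)
        intro t ht
        rw [hderiv_eq t (Set.Ioc_subset_Icc_self ht)]
        exact hcb t (Set.Ioc_subset_Icc_self ht)
      have := intervalIntegral.norm_integral_le_abs_of_norm_le hae hφint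
      have habs : |∫ t in (0:ℝ)..1, φ t| = ∫ t in (0:ℝ)..1, φ t :=
        abs_of_nonneg (intervalIntegral.integral_nonneg zero_le_one fun t _ => hφnonneg t)
      rwa [habs] at this
    have hchg : ∫ t in (0:ℝ)..1, ω (ρ * t) (τ / ρ * (ρ * t))
        = ρ⁻¹ * ∫ s in (0:ℝ)..ρ, ω s (τ / ρ * s) := by
      have := intervalIntegral.integral_comp_mul_left
        (a := (0:ℝ)) (b := 1) (f := fun s => ω s (τ / ρ * s)) (c := ρ) hρ.ne'
      simpa using this
    have hφval : ∫ t in (0:ℝ)..1, φ t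
        = κ₂ * ρ * (ρ⁻¹ * ∫ s in (0:ℝ)..ρ, ω s (τ / ρ * s)) + κ₂ * (κ₃ * τ) := by
      rw [hφ]
      rw [intervalIntegral.integral_add (hωint.const_mul (κ₂ * ρ)) intervalIntegrable_const,
        intervalIntegral.integral_const_mul, hchg, intervalIntegral.integral_const]
      simp
    have hc0 : ‖c 0‖ ≤ κ₂ * κ₁ := by
      have e : c 0 = - Ai (F (0, 0)) := by simp [hc]
      rw [e, norm_neg]
      calc ‖Ai (F (0, 0))‖ ≤ ‖Ai‖ * ‖F (0, 0)‖ := Ai.le_opNorm _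
        _ ≤ κ₂ * κ₁ := mul_le_mul hκ₂ hκ₁ (norm_nonneg _) hκ₂0
    have hgu : g u = c 1 := by simp [hg, hc]
    have hfin : κ₂ * ρ * (ρ⁻¹ * ∫ s in (0:ℝ)..ρ, ω s (τ / ρ * s)) + κ₂ * (κ₃ * τ) + κ₂ * κ₁
        = κ₂ * (κ₁ + κ₃ * τ + ∫ s in (0:ℝ)..ρ, ω s (τ / ρ * s)) := by
      field_simp
      ring
    calc ‖g u‖ = ‖(c 1 - c 0) + c 0‖ := by rw [hgu]; congr 1; abel
      _ ≤ ‖c 1 - c 0‖ + ‖c 0‖ := norm_add_le _ _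
      _ ≤ (∫ t in (0:ℝ)..1, φ t) + κ₂ * κ₁ := add_le_add hbnd hc0
      _ = κ₂ * (κ₁ + κ₃ * τ + ∫ s in (0:ℝ)..ρ, ω s (τ / ρ * s)) := by rw [hφval, hfin]
      _ ≤ ρ := hball
  -- uniqueness helper
  have hfix_iff : ∀ v : X, g v = v ↔ F (v, h) = 0 := by
    intro v
    constructor
    · intro hgv
      have h0 : Ai (F (v, h)) = 0 := by
        have : v - Ai (F (v, h)) = v := hgv
        have := sub_eq_self.1 this
        exact this
      have hinj : Function.Injective Ai := A.symm.injective
      have := hinj (h0.trans (map_zero Ai).symm)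
      simpa using this
    · intro hFv
      rw [hg]
      simp [hFv]
  have huniq : ∀ u v : X, ‖u‖ ≤ ρ → ‖v‖ ≤ ρ → g u = u → g v = v → u = v := by
    intro u v hu hv hgu hgv
    by_contra hne
    have h1 : ‖u - v‖ ≤ κ₂ * ω ρ τ * ‖u - v‖ := by
      have := hlip u v hu hv
      rwa [hgu, hgv] at this
    have h2 : 0 < ‖u - v‖ := by
      rw [norm_pos_iff]
      exact sub_ne_zero.2 hne
    nlinarith
  -- existence via Banach fixed point theorem
  haveI : Nonempty (closedBall (0:X) ρ) := ⟨⟨0, mem_closedBall_self hρ.le⟩⟩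
  haveI : CompleteSpace (closedBall (0:X) ρ) := Metric.isClosed_closedBall.completeSpace_coe
  have hnorm_of_mem : ∀ x : closedBall (0:X) ρ, ‖(x : X)‖ ≤ ρ := by
    intro x
    have := x.2
    rwa [mem_closedBall, dist_zero_right] at this
  set f : closedBall (0:X) ρ → closedBall (0:X) ρ :=
    fun x => ⟨g x, by rw [mem_closedBall, dist_zero_right]; exact hself x (hnorm_of_mem x)⟩
    with hfdef
  have hK : (0:ℝ) ≤ κ₂ * ω ρ τ := mul_nonneg hκ₂0 (hωnonneg _ _)
  have hlipf : LipschitzWith ⟨κ₂ * ω ρ τ, hK⟩ f := by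
    apply LipschitzWith.of_dist_le_mul
    intro x y
    simp only [Subtype.dist_eq]
    rw [dist_eq_norm, dist_eq_norm]
    exact hlip _ _ (hnorm_of_mem x) (hnorm_of_mem y)
  have hcontracting : ContractingWith ⟨κ₂ * ω ρ τ, hK⟩ f := by
    constructor
    · exact hcontr
    · exact hlipf
  have hfixpt := hcontracting.fixedPoint_isFixedPt
  set x₀ := ContractingWith.fixedPoint f hcontracting with hx₀
  have hgfix : g (x₀ : X) = (x₀ : X) := congrArg Subtype.val hfixpt
  refine ⟨(x₀ : X), ⟨x₀.2, (hfix_iff _).1 hgfix⟩, ?_⟩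
  rintro v ⟨hvmem, hFv⟩
  have hv : ‖v‖ ≤ ρ := by rwa [mem_closedBall, dist_zero_right] at hvmem
  exact huniq v (x₀ : X) hv (hnorm_of_mem x₀) ((hfix_iff v).2 hFv) hgfix
end

section
/- Singular-perturbation version of the quantitative IFT: Let d ≤ 4, F_ε : U_ε×V_ε → Z_ε Fréchet differentiable families (ε ∈ (0,1]), with B̄_{r₁ε^{d/2}}(0) ⊂ U_ε, B̄_{r₂ε^{d/2}}(0) ⊂ V_ε. Suppose ‖F_ε(0,0)‖ ≤ Aε², ‖∂_u F_ε(0,0)^{-1}‖ ≤ M₁, ‖∂_h F_ε(u,h)‖ ≤ M₂ and ‖∂_uF_ε(0,0) − ∂_uF_ε(u,h)‖ ≤ M₃ε^{-d/2}(‖u‖+‖h‖) on the indicated balls, and A ≤ min{r₁/(3M₁), 1/(9M₁²M₃)}. Then with ρ_ε = λ₁ε^γ, τ_ε = λ₂ε^γ, λ₁ = min{r₁, 1/(3M₁M₃)}, λ₂ = min{r₂, 1/(3M₁M₃), λ₁/(3M₁M₂)}, for every γ ∈ [d/2, 2], ε ∈ (0,1] and h_ε ∈ B̄_{τ_ε}(0)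 there is a unique u_ε ∈ B̄_{ρ_ε}(0) with F_ε(u_ε,h_ε) = 0. -/
open Metric

set_option maxHeartbeats 1000000 in
/-- singular-perturbation version of the quantitative implicit
function theorem. For families `F_ε` with residual `‖F_ε(0,0)‖ ≤ Aε²`,
uniformly invertible `∂_u F_ε(0,0)`, uniformly bounded `∂_h F_ε`, Lipschitz
modulus `M₃ ε^{-d/2}(‖u‖+‖h‖)` for `∂_u F_ε`, and
`A ≤ min{r₁/(3M₁), 1/(9M₁²M₃)}`, one gets for every `γ ∈ [d/2, 2]`,
`ε ∈ (0,1]` and `h_ε ∈ B̄_{λ₂ε^γ}(0)` a unique `u_ε ∈ B̄_{λ₁ε^γ}(0)` with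
`F_ε(u_ε, h_ε) = 0`, where `λ₁ = min{r₁, 1/(3M₁M₃)}` and
`λ₂ = min{r₂, 1/(3M₁M₃), λ₁/(3M₁M₂)}`. -/
theorem quantitative_ift_singular_perturbation
    (d : ℕ) (hd : 1 ≤ d) (hd4 : d ≤ 4)
    (X Y Z : ℝ → Type*)
    [∀ ε, NormedAddCommGroup (X ε)] [∀ ε, NormedSpace ℝ (X ε)]
    [∀ ε, CompleteSpace (X ε)]
    [∀ ε, NormedAddCommGroup (Y ε)] [∀ ε, NormedSpace ℝ (Y ε)]
    [∀ ε, NormedAddCommGroup (Z ε)] [∀ ε, NormedSpace ℝ (Z ε)]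
    (U : ∀ ε, Set (X ε)) (V : ∀ ε, Set (Y ε))
    (hUo : ∀ ε, IsOpen (U ε)) (hVo : ∀ ε, IsOpen (V ε))
    (F : ∀ ε, X ε × Y ε → Z ε)
    (DF : ∀ ε, X ε × Y ε → (X ε × Y ε →L[ℝ] Z ε))
    (r₁ r₂ A M₁ M₂ M₃ : ℝ)
    (hr₁ : 0 < r₁) (hr₂ : 0 < r₂) (hA : 0 < A)
    (hM₁ : 0 < M₁) (hM₂ : 0 < M₂) (hM₃ : 0 < M₃)
    (hballU : ∀ ε ∈ Set.Ioc (0 : ℝ) 1,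
      closedBall (0 : X ε) (r₁ * ε ^ ((d : ℝ) / 2)) ⊆ U ε)
    (hballV : ∀ ε ∈ Set.Ioc (0 : ℝ) 1,
      closedBall (0 : Y ε) (r₂ * ε ^ ((d : ℝ) / 2)) ⊆ V ε)
    (hF : ∀ ε ∈ Set.Ioc (0 : ℝ) 1, ∀ p ∈ (U ε) ×ˢ (V ε),
      HasFDerivAt (F ε) (DF ε p) p)
    (Ainv : ∀ ε, X ε ≃L[ℝ] Z ε)
    (hAinv : ∀ ε ∈ Set.Ioc (0 : ℝ) 1,
      (DF ε (0, 0)).comp (ContinuousLinearMap.inl ℝ (X ε) (Y ε)) =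
        ((Ainv ε) : X ε →L[ℝ] Z ε))
    (hres : ∀ ε ∈ Set.Ioc (0 : ℝ) 1, ‖F ε (0, 0)‖ ≤ A * ε ^ 2)
    (hM₁' : ∀ ε ∈ Set.Ioc (0 : ℝ) 1, ‖((Ainv ε).symm : Z ε →L[ℝ] X ε)‖ ≤ M₁)
    (hM₂' : ∀ ε ∈ Set.Ioc (0 : ℝ) 1, ∀ (u : X ε) (h : Y ε),
      ‖u‖ ≤ r₁ * ε ^ ((d : ℝ) / 2) → ‖h‖ ≤ r₂ * ε ^ ((d : ℝ) / 2) →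
      ‖(DF ε (u, h)).comp (ContinuousLinearMap.inr ℝ (X ε) (Y ε))‖ ≤ M₂)
    (hM₃' : ∀ ε ∈ Set.Ioc (0 : ℝ) 1, ∀ (u : X ε) (h : Y ε),
      ‖u‖ ≤ r₁ * ε ^ ((d : ℝ) / 2) → ‖h‖ ≤ r₂ * ε ^ ((d : ℝ) / 2) →
      ‖(DF ε (0, 0)).comp (ContinuousLinearMap.inl ℝ (X ε) (Y ε)) -
          (DF ε (u, h)).comp (ContinuousLinearMap.inl ℝ (X ε) (Y ε))‖ ≤
        M₃ * ε ^ (-(d : ℝ) / 2) * (‖u‖ + ‖h‖))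
    (hAsmall : A ≤ min (r₁ / (3 * M₁)) (1 / (9 * M₁ ^ 2 * M₃))) :
    ∀ γ ∈ Set.Icc ((d : ℝ) / 2) 2, ∀ ε ∈ Set.Ioc (0 : ℝ) 1,
      ∀ h ∈ closedBall (0 : Y ε)
        (min r₂ (min (1 / (3 * M₁ * M₃))
          (min r₁ (1 / (3 * M₁ * M₃)) / (3 * M₁ * M₂))) * ε ^ γ),
      ∃! u, u ∈ closedBall (0 : X ε)
          (min r₁ (1 / (3 * M₁ * M₃)) * ε ^ γ) ∧ F ε (u, h) = 0 := by
  intro γ hγ ε hε h hh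
  obtain ⟨hγl, hγu⟩ := hγ
  obtain ⟨hε0, hε1⟩ := hε
  have hεmem : ε ∈ Set.Ioc (0:ℝ) 1 := ⟨hε0, hε1⟩
  have hM₁0 : M₁ ≠ 0 := hM₁.ne'
  have hM₂0 : M₂ ≠ 0 := hM₂.ne'
  have hM₃0 : M₃ ≠ 0 := hM₃.ne'
  set lam1 : ℝ := min r₁ (1 / (3 * M₁ * M₃)) with hlam1
  set lam2 : ℝ := min r₂ (min (1 / (3 * M₁ * M₃)) (lam1 / (3 * M₁ * M₂))) with hlam2
  set ρ : ℝ := lam1 * ε ^ γ with hρdef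
  set τ : ℝ := lam2 * ε ^ γ with hτdef
  have h3M₁M₃ : 0 < 3 * M₁ * M₃ := by positivity
  have hlam1pos : 0 < lam1 := lt_min hr₁ (by positivity)
  have hlam2pos : 0 < lam2 := lt_min hr₂ (lt_min (by positivity) (by positivity))
  have hεγpos : 0 < ε ^ γ := Real.rpow_pos_of_pos hε0 γ
  have hεdpos : 0 < ε ^ ((d:ℝ)/2) := Real.rpow_pos_of_pos hε0 _
  have hεnegd : 0 < ε ^ (-(d:ℝ)/2) := Real.rpow_pos_of_pos hε0 _
  have hρpos : 0 < ρ := by positivity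
  have hτpos : 0 < τ := by positivity
  have hεγd : ε ^ γ ≤ ε ^ ((d:ℝ)/2) := Real.rpow_le_rpow_of_exponent_ge hε0 hε1 hγl
  have hρr : ρ ≤ r₁ * ε ^ ((d:ℝ)/2) := mul_le_mul (min_le_left _ _) hεγd hεγpos.le hr₁.le
  have hτr : τ ≤ r₂ * ε ^ ((d:ℝ)/2) := mul_le_mul (min_le_left _ _) hεγd hεγpos.le hr₂.le
  have hhτ : ‖h‖ ≤ τ := by simpa [mem_closedBall_zero_iff] using hh
  -- memberships
  have hmemU : ∀ u : X ε, ‖u‖ ≤ ρ → u ∈ U ε := fun u hu =>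
    hballU ε hεmem (mem_closedBall_zero_iff.2 (hu.trans hρr))
  have hmemV : ∀ w : Y ε, ‖w‖ ≤ τ → w ∈ V ε := fun w hw =>
    hballV ε hεmem (mem_closedBall_zero_iff.2 (hw.trans hτr))
  -- partial derivatives
  have hFu : ∀ (u : X ε) (w : Y ε), ‖u‖ ≤ ρ → ‖w‖ ≤ τ →
      HasFDerivAt (fun v => F ε (v, w))
        ((DF ε (u, w)).comp (ContinuousLinearMap.inl ℝ (X ε) (Y ε))) u := by
    intro u w hu hw
    have hg : HasFDerivAt (fun v : X ε => (v, w))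
        (ContinuousLinearMap.inl ℝ (X ε) (Y ε)) u :=
      HasFDerivAt.prodMk (hasFDerivAt_id u) (hasFDerivAt_const w u)
    exact (hF ε hεmem (u, w) ⟨hmemU u hu, hmemV w hw⟩).comp u hg
  have hFh : ∀ (u : X ε) (w : Y ε), ‖u‖ ≤ ρ → ‖w‖ ≤ τ →
      HasFDerivAt (fun z => F ε (u, z))
        ((DF ε (u, w)).comp (ContinuousLinearMap.inr ℝ (X ε) (Y ε))) w := by
    intro u w hu hw
    have hg : HasFDerivAt (fun z : Y ε => (u, z))
        (ContinuousLinearMap.inr ℝ (X ε) (Y ε)) w :=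
      HasFDerivAt.prodMk (hasFDerivAt_const u w) (hasFDerivAt_id w)
    exact (hF ε hεmem (u, w) ⟨hmemU u hu, hmemV w hw⟩).comp w hg
  -- key mean-value estimate in the u variable
  have key : ∀ (w : Y ε), ‖w‖ ≤ τ → ∀ u ∈ closedBall (0:X ε) ρ, ∀ u' ∈ closedBall (0:X ε) ρ,
      ‖((Ainv ε) u - F ε (u, w)) - ((Ainv ε) u' - F ε (u', w))‖ ≤
        (M₃ * ε ^ (-(d:ℝ)/2) * (ρ + ‖w‖)) * ‖u - u'‖ := by
    intro w hw u hu u' hu'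
    have mvt := Convex.norm_image_sub_le_of_norm_hasFDerivWithin_le
      (f := fun v => ((Ainv ε : X ε →L[ℝ] Z ε)) v - F ε (v, w))
      (f' := fun v => (DF ε (0, 0)).comp (ContinuousLinearMap.inl ℝ (X ε) (Y ε)) -
          (DF ε (v, w)).comp (ContinuousLinearMap.inl ℝ (X ε) (Y ε)))
      (s := closedBall (0:X ε) ρ)
      (C := M₃ * ε ^ (-(d:ℝ)/2) * (ρ + ‖w‖))
      (fun v hv => by
        have hv' : ‖v‖ ≤ ρ := mem_closedBall_zero_iff.1 hv
        have h1 : HasFDerivAt (fun v => ((Ainv ε : X ε →L[ℝ] Z ε)) v - F ε (v, w))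
            ((Ainv ε : X ε →L[ℝ] Z ε) -
              (DF ε (v, w)).comp (ContinuousLinearMap.inl ℝ (X ε) (Y ε))) v :=
          ((Ainv ε : X ε →L[ℝ] Z ε).hasFDerivAt).sub (hFu v w hv' hw)
        have h2 : HasFDerivAt (fun v => ((Ainv ε : X ε →L[ℝ] Z ε)) v - F ε (v, w))
            ((DF ε (0, 0)).comp (ContinuousLinearMap.inl ℝ (X ε) (Y ε)) -
              (DF ε (v, w)).comp (ContinuousLinearMap.inl ℝ (X ε) (Y ε))) v := by
          rw [hAinv ε hεmem]; exact h1
        exact h2.hasFDerivWithinAt)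
      (fun v hv => by
        have hv' : ‖v‖ ≤ ρ := mem_closedBall_zero_iff.1 hv
        refine (hM₃' ε hεmem v w (hv'.trans hρr) (hw.trans hτr)).trans ?_
        have hnn : (0:ℝ) ≤ M₃ * ε ^ (-(d:ℝ)/2) := by positivity
        exact mul_le_mul_of_nonneg_left (add_le_add hv' le_rfl) hnn)
      (convex_closedBall _ _) hu' hu
    simpa using mvt
  -- bound on the h-direction increment
  have hψ : ∀ u : X ε, ‖u‖ ≤ ρ → ‖F ε (u, h) - F ε (u, 0)‖ ≤ M₂ * τ := by
    intro u hu
    have mvt := Convex.norm_image_sub_le_of_norm_hasFDerivWithin_le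
      (f := fun z => F ε (u, z))
      (f' := fun z => (DF ε (u, z)).comp (ContinuousLinearMap.inr ℝ (X ε) (Y ε)))
      (s := closedBall (0:Y ε) τ) (C := M₂)
      (fun z hz => (hFh u z hu (mem_closedBall_zero_iff.1 hz)).hasFDerivWithinAt)
      (fun z hz => hM₂' ε hεmem u z (hu.trans hρr)
        ((mem_closedBall_zero_iff.1 hz).trans hτr))
      (convex_closedBall _ _) (mem_closedBall_self hτpos.le)
      (mem_closedBall_zero_iff.2 hhτ)
    refine mvt.trans ?_
    rw [sub_zero]
    exact mul_le_mul_of_nonneg_left hhτ hM₂.le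
  -- basic facts
  have hM₁z : ∀ z : Z ε, ‖(Ainv ε).symm z‖ ≤ M₁ * ‖z‖ := fun z =>
    (((Ainv ε).symm : Z ε →L[ℝ] X ε).le_opNorm z).trans
      (mul_le_mul_of_nonneg_right (hM₁' ε hεmem) (norm_nonneg z))
  have hzero : (0:X ε) ∈ closedBall (0:X ε) ρ := mem_closedBall_self hρpos.le
  have hTval : ∀ u : X ε, u - (Ainv ε).symm (F ε (u, h)) =
      (Ainv ε).symm ((Ainv ε) u - F ε (u, h)) := by
    intro u
    rw [map_sub, ContinuousLinearEquiv.symm_apply_apply]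
  -- numeric bounds
  have hlam1a : lam1 ≤ 1 / (3 * M₁ * M₃) := min_le_right _ _
  have hlam1M : M₁ * M₃ * lam1 ≤ 1/3 := by
    have h1 : (3 * M₁ * M₃) * lam1 ≤ (3 * M₁ * M₃) * (1 / (3 * M₁ * M₃)) :=
      mul_le_mul_of_nonneg_left hlam1a h3M₁M₃.le
    rw [mul_one_div, div_self h3M₁M₃.ne'] at h1
    linarith
  have hA1 : A ≤ r₁ / (3 * M₁) := hAsmall.trans (min_le_left _ _)
  have hA2 : A ≤ 1 / (9 * M₁ ^ 2 * M₃) := hAsmall.trans (min_le_right _ _)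
  have hM₁A : M₁ * A ≤ lam1 / 3 := by
    have h1 : M₁ * A ≤ r₁ / 3 := by
      have h1' : M₁ * A ≤ M₁ * (r₁ / (3 * M₁)) := mul_le_mul_of_nonneg_left hA1 hM₁.le
      have h1'' : M₁ * (r₁ / (3 * M₁)) = r₁ / 3 := by
        field_simp
      linarith
    have h2 : M₁ * A ≤ (1 / (3 * M₁ * M₃)) / 3 := by
      have h2' : M₁ * A ≤ M₁ * (1 / (9 * M₁ ^ 2 * M₃)) := mul_le_mul_of_nonneg_left hA2 hM₁.le
      have h2'' : M₁ * (1 / (9 * M₁ ^ 2 * M₃)) = (1 / (3 * M₁ * M₃)) / 3 := by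
        field_simp
        ring
      linarith
    rw [hlam1]
    rcases le_total r₁ (1 / (3 * M₁ * M₃)) with hc | hc
    · rw [min_eq_left hc]; linarith
    · rw [min_eq_right hc]; linarith
  have hlam2b : lam2 ≤ lam1 / (3 * M₁ * M₂) := (min_le_right _ _).trans (min_le_right _ _)
  have hlam2a : lam2 ≤ 1 / (3 * M₁ * M₃) := (min_le_right _ _).trans (min_le_left _ _)
  have hlam2M : M₁ * M₃ * lam2 ≤ 1/3 := by
    have h1 : (3 * M₁ * M₃) * lam2 ≤ (3 * M₁ * M₃) * (1 / (3 * M₁ * M₃)) :=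
      mul_le_mul_of_nonneg_left hlam2a h3M₁M₃.le
    rw [mul_one_div, div_self h3M₁M₃.ne'] at h1
    linarith
  have hM₁M₂τ : M₁ * (M₂ * τ) ≤ lam1 / 3 * ε ^ γ := by
    have h1 : M₁ * M₂ * lam2 ≤ lam1 / 3 := by
      have h1' : (M₁ * M₂) * lam2 ≤ (M₁ * M₂) * (lam1 / (3 * M₁ * M₂)) :=
        mul_le_mul_of_nonneg_left hlam2b (by positivity)
      have h1'' : (M₁ * M₂) * (lam1 / (3 * M₁ * M₂)) = lam1 / 3 := by
        field_simp
      linarith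
    have h2 : M₁ * (M₂ * τ) = (M₁ * M₂ * lam2) * ε ^ γ := by rw [hτdef]; ring
    rw [h2]
    exact mul_le_mul_of_nonneg_right h1 hεγpos.le
  have hε2γ : ε ^ (2:ℕ) ≤ ε ^ γ := by
    rw [← Real.rpow_natCast ε 2]
    exact Real.rpow_le_rpow_of_exponent_ge hε0 hε1 (by exact_mod_cast hγu)
  have hεcomb : ε ^ (-(d:ℝ)/2) * ε ^ γ ≤ 1 := by
    rw [← Real.rpow_add hε0]
    refine Real.rpow_le_one hε0.le hε1 ?_
    have : (d:ℝ)/2 ≤ γ := hγl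
    linarith
  have hquad : M₁ * (M₃ * ε ^ (-(d:ℝ)/2) * ρ * ρ) ≤ lam1 / 3 * ε ^ γ := by
    have h1 : M₁ * (M₃ * ε ^ (-(d:ℝ)/2) * ρ * ρ)
        = (M₁ * M₃ * lam1) * (ε ^ (-(d:ℝ)/2) * ε ^ γ) * (lam1 * ε ^ γ) := by
      rw [hρdef]; ring
    rw [h1]
    have h2 : (M₁ * M₃ * lam1) * (ε ^ (-(d:ℝ)/2) * ε ^ γ) ≤ 1/3 := by
      have hnn : (0:ℝ) ≤ M₁ * M₃ * lam1 := by positivity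
      have := mul_le_mul_of_nonneg_left hεcomb hnn
      rw [mul_one] at this
      linarith
    have h3 : (M₁ * M₃ * lam1) * (ε ^ (-(d:ℝ)/2) * ε ^ γ) * (lam1 * ε ^ γ)
        ≤ 1/3 * (lam1 * ε ^ γ) := mul_le_mul_of_nonneg_right h2 (by positivity)
    exact h3.trans (le_of_eq (by ring))
  -- self-map
  have hself : ∀ u ∈ closedBall (0:X ε) ρ,
      ‖u - (Ainv ε).symm (F ε (u, h))‖ ≤ ρ := by
    intro u hu
    have hu' : ‖u‖ ≤ ρ := mem_closedBall_zero_iff.1 hu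
    have e1 : (Ainv ε) u - F ε (u, h) =
        (((Ainv ε) u - F ε (u, 0)) - ((Ainv ε) (0:X ε) - F ε ((0:X ε), 0)))
          - F ε (0, 0) - (F ε (u, h) - F ε (u, 0)) := by
      rw [map_zero]; abel
    have b1 := key 0 (by simpa using hτpos.le) u hu 0 hzero
    rw [norm_zero, add_zero] at b1
    have b1' : ‖((Ainv ε) u - F ε (u, 0)) - ((Ainv ε) (0:X ε) - F ε ((0:X ε), 0))‖ ≤
        M₃ * ε ^ (-(d:ℝ)/2) * ρ * ρ := by
      refine b1.trans ?_
      have hb : ‖u - 0‖ ≤ ρ := by rwa [sub_zero]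
      exact mul_le_mul_of_nonneg_left hb (by positivity)
    have b2 := hres ε hεmem
    have b3 := hψ u hu'
    have btot : ‖(Ainv ε) u - F ε (u, h)‖ ≤
        M₃ * ε ^ (-(d:ℝ)/2) * ρ * ρ + A * ε ^ 2 + M₂ * τ := by
      rw [e1]
      refine (norm_sub_le _ _).trans ?_
      refine add_le_add ?_ b3
      refine (norm_sub_le _ _).trans ?_
      exact add_le_add b1' b2
    rw [hTval u]
    refine (hM₁z _).trans ?_
    have c1 : M₁ * ‖(Ainv ε) u - F ε (u, h)‖
        ≤ M₁ * (M₃ * ε ^ (-(d:ℝ)/2) * ρ * ρ + A * ε ^ 2 + M₂ * τ) :=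
      mul_le_mul_of_nonneg_left btot hM₁.le
    have c2 : M₁ * (M₃ * ε ^ (-(d:ℝ)/2) * ρ * ρ + A * ε ^ 2 + M₂ * τ)
        = M₁ * (M₃ * ε ^ (-(d:ℝ)/2) * ρ * ρ) + M₁ * A * ε ^ 2 + M₁ * (M₂ * τ) := by ring
    have c3 : M₁ * A * ε ^ 2 ≤ lam1 / 3 * ε ^ γ := by
      have c3' : M₁ * A * ε ^ 2 ≤ M₁ * A * ε ^ γ :=
        mul_le_mul_of_nonneg_left hε2γ (by positivity)
      have c3'' : M₁ * A * ε ^ γ ≤ lam1 / 3 * ε ^ γ :=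
        mul_le_mul_of_nonneg_right hM₁A hεγpos.le
      linarith
    have c4 : ρ = lam1 / 3 * ε ^ γ + lam1 / 3 * ε ^ γ + lam1 / 3 * ε ^ γ := by
      rw [hρdef]; ring
    rw [c4]
    calc M₁ * ‖(Ainv ε) u - F ε (u, h)‖
        ≤ M₁ * (M₃ * ε ^ (-(d:ℝ)/2) * ρ * ρ) + M₁ * A * ε ^ 2 + M₁ * (M₂ * τ) := by
          rw [← c2]; exact c1
      _ ≤ lam1 / 3 * ε ^ γ + lam1 / 3 * ε ^ γ + lam1 / 3 * ε ^ γ := by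
          exact add_le_add (add_le_add hquad c3) hM₁M₂τ
  -- contraction
  have hcontr : ∀ u ∈ closedBall (0:X ε) ρ, ∀ u' ∈ closedBall (0:X ε) ρ,
      ‖(u - (Ainv ε).symm (F ε (u, h))) - (u' - (Ainv ε).symm (F ε (u', h)))‖ ≤
        2/3 * ‖u - u'‖ := by
    intro u hu u' hu'
    have e1 : (u - (Ainv ε).symm (F ε (u, h))) - (u' - (Ainv ε).symm (F ε (u', h))) =
        (Ainv ε).symm (((Ainv ε) u - F ε (u, h)) - ((Ainv ε) u' - F ε (u', h))) := by
      rw [map_sub, ← hTval u, ← hTval u']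
    rw [e1]
    refine (hM₁z _).trans ?_
    have b := key h hhτ u hu u' hu'
    have hCk : M₁ * (M₃ * ε ^ (-(d:ℝ)/2) * (ρ + ‖h‖)) ≤ 2/3 := by
      have h1 : ρ + ‖h‖ ≤ (lam1 + lam2) * ε ^ γ := by
        have h1' : ρ + ‖h‖ ≤ ρ + τ := by linarith
        have h1'' : ρ + τ = (lam1 + lam2) * ε ^ γ := by rw [hρdef, hτdef]; ring
        linarith
      have h2 : M₁ * (M₃ * ε ^ (-(d:ℝ)/2) * (ρ + ‖h‖)) ≤
          (M₁ * M₃ * (lam1 + lam2)) * (ε ^ (-(d:ℝ)/2) * ε ^ γ) := by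
        have e2 : M₁ * (M₃ * ε ^ (-(d:ℝ)/2) * (ρ + ‖h‖)) =
            (M₁ * M₃) * (ε ^ (-(d:ℝ)/2)) * (ρ + ‖h‖) := by ring
        have e3 : (M₁ * M₃ * (lam1 + lam2)) * (ε ^ (-(d:ℝ)/2) * ε ^ γ) =
            (M₁ * M₃) * (ε ^ (-(d:ℝ)/2)) * ((lam1 + lam2) * ε ^ γ) := by ring
        rw [e2, e3]
        exact mul_le_mul_of_nonneg_left h1 (by positivity)
      refine h2.trans ?_
      have h3 : M₁ * M₃ * (lam1 + lam2) ≤ 2/3 := by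
        rw [mul_add]
        linarith
      have h4 := mul_le_mul_of_nonneg_left hεcomb
        (by positivity : (0:ℝ) ≤ M₁ * M₃ * (lam1 + lam2))
      rw [mul_one] at h4
      linarith
    have c1 : M₁ * ‖((Ainv ε) u - F ε (u, h)) - ((Ainv ε) u' - F ε (u', h))‖
        ≤ M₁ * ((M₃ * ε ^ (-(d:ℝ)/2) * (ρ + ‖h‖)) * ‖u - u'‖) :=
      mul_le_mul_of_nonneg_left b hM₁.le
    have c2 : M₁ * ((M₃ * ε ^ (-(d:ℝ)/2) * (ρ + ‖h‖)) * ‖u - u'‖)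
        = (M₁ * (M₃ * ε ^ (-(d:ℝ)/2) * (ρ + ‖h‖))) * ‖u - u'‖ := by ring
    have c3 : (M₁ * (M₃ * ε ^ (-(d:ℝ)/2) * (ρ + ‖h‖))) * ‖u - u'‖ ≤ 2/3 * ‖u - u'‖ :=
      mul_le_mul_of_nonneg_right hCk (norm_nonneg _)
    rw [c2] at c1
    linarith
  -- Banach fixed point
  set T : X ε → X ε := fun u => u - (Ainv ε).symm (F ε (u, h)) with hTdef
  have hsc : IsComplete (closedBall (0:X ε) ρ) := isClosed_closedBall.isComplete
  have hsf : Set.MapsTo T (closedBall (0:X ε) ρ) (closedBall (0:X ε) ρ) := by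
    intro u hu
    exact mem_closedBall_zero_iff.2 (hself u hu)
  have hTc : ContractingWith (⟨2/3, by norm_num⟩ : NNReal)
      (hsf.restrict T (closedBall (0:X ε) ρ) (closedBall (0:X ε) ρ)) := by
    constructor
    · exact NNReal.coe_lt_coe.1 (show (2/3:ℝ) < 1 by norm_num)
    · apply LipschitzWith.of_dist_le_mul
      rintro ⟨u, hu⟩ ⟨u', hu'⟩
      have e : dist (hsf.restrict T _ _ ⟨u, hu⟩) (hsf.restrict T _ _ ⟨u', hu'⟩) =
          dist (T u) (T u') := rfl
      rw [e, Subtype.dist_eq, dist_eq_norm, dist_eq_norm]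
      exact hcontr u hu u' hu'
  have hedist : edist (0:X ε) (T 0) ≠ ⊤ := edist_ne_top _ _
  obtain ⟨u₀, hu₀mem, hu₀fix, -⟩ := hTc.exists_fixedPoint' hsc hsf hzero hedist
  have hFu₀ : F ε (u₀, h) = 0 := by
    have h1 : u₀ - (Ainv ε).symm (F ε (u₀, h)) = u₀ := hu₀fix
    have h2 : (Ainv ε).symm (F ε (u₀, h)) = 0 := sub_eq_self.1 h1
    have h3 := congrArg (Ainv ε) h2
    rwa [ContinuousLinearEquiv.apply_symm_apply, map_zero] at h3
  refine ⟨u₀, ⟨hu₀mem, hFu₀⟩, ?_⟩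
  rintro y ⟨hy, hyF⟩
  have hyfix : y - (Ainv ε).symm (F ε (y, h)) = y := by
    rw [hyF, map_zero, sub_zero]
  have h1 : ‖y - u₀‖ ≤ 2/3 * ‖y - u₀‖ := by
    have hc := hcontr y hy u₀ hu₀mem
    have hu₀fix' : u₀ - (Ainv ε).symm (F ε (u₀, h)) = u₀ := hu₀fix
    rw [hyfix, hu₀fix'] at hc
    exact hc
  have h2 : ‖y - u₀‖ = 0 := by
    have := norm_nonneg (y - u₀)
    linarith
  exact sub_eq_zero.1 (norm_eq_zero.1 h2)
end
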